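/- The semidirect product ℤ² ⋊ S₂ (with S₂ permuting coordinates) has the presentation with two generators a, b and relations b² = e and ba²ba⁻² = e, where the isomorphism sends a to ((0, 1), c) with c the transposition of the two coordinates, and b to (0, c). -/

import Mathlib

/-- The automorphism of `ℤ^α` (written multiplicatively) given by permuting
coordinates by `s`. -/
def permMulAut {α : Type*} (s : Equiv.Perm α) : MulAut (Multiplicative (α → ℤ)) where
  toFun z := Multiplicative.ofAdd (Multiplicative.toAdd z ∘ ⇑s.symm)
  invFun z := Multiplicative.ofAdd (Multiplicative.toAdd z ∘ ⇑s)
  left_inv z := by simp [Function.comp_def]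
  right_inv z := by simp [Function.comp_def]
  map_mul' z₁ z₂ := rfl

/-- The action of the symmetric group on `ℤ^α` by permuting coordinates,
as a homomorphism to the automorphism group. -/
def permHom (α : Type*) : Equiv.Perm α →* MulAut (Multiplicative (α → ℤ)) where
  toFun := permMulAut
  map_one' := by ext z; rfl
  map_mul' s t := by ext z; rfl

/-- Relators on the two generators `a` (encoded `true`) and `b` (encoded
`false`): `b² = e` and `ba²ba⁻² = e`. -/
def sdpRelsTwo : Set (FreeGroup Bool) :=
  letI a : FreeGroup Bool := FreeGroup.of true
  letI b : FreeGroup Bool := FreeGroup.of false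
  {b ^ 2, b * a ^ 2 * b * (a ^ 2)⁻¹}

namespace SdpAux

abbrev G := Multiplicative (Fin 2 → ℤ) ⋊[permHom (Fin 2)] Equiv.Perm (Fin 2)
abbrev P := PresentedGroup sdpRelsTwo

def c : Equiv.Perm (Fin 2) := Equiv.swap 0 1

def a : G := ⟨Multiplicative.ofAdd (Pi.single (1 : Fin 2) (1 : ℤ)), c⟩
def b : G := ⟨1, c⟩

lemma perm_cases (σ : Equiv.Perm (Fin 2)) : σ = 1 ∨ σ = Equiv.swap 0 1 := by
  revert σ; decide

lemma c_ne_one : c ≠ 1 := by decide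

lemma rel_hold : ∀ r ∈ sdpRelsTwo, FreeGroup.lift (fun x => if x then a else b) r = 1 := by
  intro r hr
  have hA : FreeGroup.lift (fun x => if x then a else b) (FreeGroup.of true) = a := by simp
  have hB : FreeGroup.lift (fun x => if x then a else b) (FreeGroup.of false) = b := by simp
  rcases hr with h | h <;> subst h <;>
    simp only [map_mul, map_pow, map_inv, hA, hB]
  · show b * b = 1
    refine SemidirectProduct.ext ?_ ?_ <;> decide
  · rw [mul_inv_eq_one, pow_two]
    show b * (a * a) * b = a * a
    refine SemidirectProduct.ext ?_ ?_ <;> decide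

/-- The forward homomorphism. -/
def Ψ : P →* G := PresentedGroup.toGroup rel_hold

def A : P := PresentedGroup.of true
def B : P := PresentedGroup.of false

lemma rel_of_mem {r : FreeGroup Bool} (h : r ∈ sdpRelsTwo) :
    PresentedGroup.mk sdpRelsTwo r = 1 := by
  rw [← (PresentedGroup.mk sdpRelsTwo).map_one]
  apply QuotientGroup.eq.2
  simpa using Subgroup.subset_normalClosure h

lemma B_sq : B * B = 1 := by
  have := rel_of_mem (Set.mem_insert _ _)
  simpa [pow_two, B, PresentedGroup.of] using this

lemma B_inv : B⁻¹ = B := inv_eq_of_mul_eq_one_right B_sq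

lemma BA2B : B * (A * A) * B = A * A := by
  have h := rel_of_mem (r := FreeGroup.of false * FreeGroup.of true ^ 2 * FreeGroup.of false *
      (FreeGroup.of true ^ 2)⁻¹) (Set.mem_insert_of_mem _ rfl)
  have h2 : B * A ^ 2 * B * (A ^ 2)⁻¹ = 1 := by
    simpa [A, B, PresentedGroup.of] using h
  have := mul_inv_eq_one.mp h2
  simpa [pow_two, mul_assoc] using this

def u : P := A * B
def v : P := B * A

lemma uv : u * v = A * A := by
  simp [u, v, mul_assoc, show B * (B * A) = A by rw [← mul_assoc, B_sq, one_mul]]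

lemma vu : v * u = A * A := by
  have : v * u = B * (A * A) * B := by simp [u, v, mul_assoc]
  rw [this, BA2B]

lemma comm_uv : Commute u v := by unfold Commute SemiconjBy; rw [uv, vu]

lemma BuB : B * u * B⁻¹ = v := by
  rw [B_inv]; simp [u, v, mul_assoc, B_sq]

lemma BvB : B * v * B⁻¹ = u := by
  rw [B_inv, v, u]
  rw [show B * (B * A) * B = (B * B) * (A * B) by group, B_sq, one_mul]

/-- hom from ℤ² to P -/
def fN : Multiplicative (Fin 2 → ℤ) →* P where
  toFun z := v ^ (Multiplicative.toAdd z 0) * u ^ (Multiplicative.toAdd z 1)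
  map_one' := by simp
  map_mul' z w := by
    show v ^ (Multiplicative.toAdd z 0 + Multiplicative.toAdd w 0) *
        u ^ (Multiplicative.toAdd z 1 + Multiplicative.toAdd w 1) = _
    rw [zpow_add, zpow_add]
    have h := (comm_uv.symm.zpow_zpow (Multiplicative.toAdd w 0) (Multiplicative.toAdd z 1)).eq
    rw [mul_assoc, mul_assoc, ← mul_assoc (v ^ Multiplicative.toAdd w 0), h, mul_assoc]

def gS : Equiv.Perm (Fin 2) →* P where
  toFun σ := if σ = 1 then 1 else B
  map_one' := if_pos rfl
  map_mul' σ τ := by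
    rcases perm_cases σ with h | h <;> rcases perm_cases τ with h' | h' <;> subst h <;> subst h' <;>
      simp_all [Equiv.swap_mul_self, B_sq, show (Equiv.swap (0:Fin 2) 1) ≠ 1 from c_ne_one]

lemma compat : ∀ σ : Equiv.Perm (Fin 2),
    fN.comp ((permHom (Fin 2)) σ).toMonoidHom = (MulAut.conj (gS σ)).toMonoidHom.comp fN := by
  intro σ
  ext z
  rcases perm_cases σ with h | h <;> subst h
  · simp [gS]
  · have hσ : gS (Equiv.swap (0:Fin 2) 1) = B := by
      simp [gS, show (Equiv.swap (0:Fin 2) 1) ≠ 1 from c_ne_one]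
    simp only [MonoidHom.comp_apply, MulEquiv.coe_toMonoidHom, MulAut.conj_apply, hσ]
    have h0 : (Equiv.swap (0:Fin 2) 1).symm 0 = 1 := by decide
    have h1 : (Equiv.swap (0:Fin 2) 1).symm 1 = 0 := by decide
    show v ^ (Multiplicative.toAdd z ((Equiv.swap (0:Fin 2) 1).symm 0)) *
        u ^ (Multiplicative.toAdd z ((Equiv.swap (0:Fin 2) 1).symm 1)) = _
    rw [h0, h1]
    show v ^ (Multiplicative.toAdd z 1) * u ^ (Multiplicative.toAdd z 0) = B *
        (v ^ (Multiplicative.toAdd z 0) * u ^ (Multiplicative.toAdd z 1)) * B⁻¹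
    have key : B * (v ^ (Multiplicative.toAdd z 0) * u ^ (Multiplicative.toAdd z 1)) * B⁻¹
        = (B * v * B⁻¹) ^ (Multiplicative.toAdd z 0) *
          (B * u * B⁻¹) ^ (Multiplicative.toAdd z 1) := by
      simp only [← MulAut.conj_apply, map_mul, map_zpow]
    rw [key, BuB, BvB]
    exact ((comm_uv.zpow_zpow _ _).eq).symm

def Φ : G →* P := SemidirectProduct.lift fN gS compat

lemma ΨA : Ψ A = a := PresentedGroup.toGroup.of rel_hold
lemma ΨB : Ψ B = b := PresentedGroup.toGroup.of rel_hold

lemma gS_c : gS c = B := by simp [gS, c, show (Equiv.swap (0:Fin 2) 1) ≠ 1 from c_ne_one]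

lemma Φa : Φ a = A := by
  have ha : a = SemidirectProduct.inl (φ := permHom (Fin 2))
      (Multiplicative.ofAdd (Pi.single (1 : Fin 2) (1 : ℤ))) * SemidirectProduct.inr c :=
    SemidirectProduct.mk_eq_inl_mul_inr c _
  rw [ha, map_mul, Φ, SemidirectProduct.lift_inl, SemidirectProduct.lift_inr, gS_c]
  have h0 : (Pi.single (1 : Fin 2) (1 : ℤ) : Fin 2 → ℤ) 0 = 0 := by simp
  have h1 : (Pi.single (1 : Fin 2) (1 : ℤ) : Fin 2 → ℤ) 1 = 1 := by simp
  have hf : fN (Multiplicative.ofAdd (Pi.single (1 : Fin 2) (1 : ℤ))) = u := by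
    show v ^ ((Pi.single (1 : Fin 2) (1 : ℤ) : Fin 2 → ℤ) 0) *
        u ^ ((Pi.single (1 : Fin 2) (1 : ℤ) : Fin 2 → ℤ) 1) = u
    rw [h0, h1]; simp
  rw [hf, u, mul_assoc, B_sq, mul_one]

lemma Φb : Φ b = B := by
  have hb : b = SemidirectProduct.inr (φ := permHom (Fin 2)) c := rfl
  rw [hb, Φ, SemidirectProduct.lift_inr, gS_c]

lemma ΦΨ : Φ.comp Ψ = MonoidHom.id P := by
  apply PresentedGroup.ext
  intro x
  cases x
  · show Φ (Ψ B) = B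
    rw [ΨB, Φb]
  · show Φ (Ψ A) = A
    rw [ΨA, Φa]

lemma Ψu : Ψ u = SemidirectProduct.inl
    (Multiplicative.ofAdd (Pi.single (1 : Fin 2) (1 : ℤ))) := by
  rw [u, map_mul, ΨA, ΨB]
  show a * b = _
  refine SemidirectProduct.ext ?_ ?_ <;> decide

lemma Ψv : Ψ v = SemidirectProduct.inl
    (Multiplicative.ofAdd (Pi.single (0 : Fin 2) (1 : ℤ))) := by
  rw [v, map_mul, ΨA, ΨB]
  show b * a = _
  refine SemidirectProduct.ext ?_ ?_ <;> decide

lemma ΨΦ : Ψ.comp Φ = MonoidHom.id G := by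
  apply SemidirectProduct.hom_ext
  · refine MonoidHom.ext fun z => ?_
    simp only [MonoidHom.comp_apply, MonoidHom.id_apply, Φ, SemidirectProduct.lift_inl]
    show Ψ (v ^ (Multiplicative.toAdd z 0) * u ^ (Multiplicative.toAdd z 1)) =
        SemidirectProduct.inl z
    rw [map_mul, map_zpow, map_zpow, Ψu, Ψv,
      ← map_zpow (SemidirectProduct.inl (φ := permHom (Fin 2))),
      ← map_zpow (SemidirectProduct.inl (φ := permHom (Fin 2))), ← map_mul]
    congr 1
    apply Multiplicative.toAdd.injective
    funext i
    simp only [toAdd_mul, toAdd_zpow, toAdd_ofAdd, Pi.add_apply, Pi.smul_apply, smul_eq_mul]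
    fin_cases i <;> simp [Pi.single_apply]
  · refine MonoidHom.ext fun σ => ?_
    simp only [MonoidHom.comp_apply, MonoidHom.id_apply, Φ, SemidirectProduct.lift_inr]
    rcases perm_cases σ with h | h <;> subst h
    · simp [gS]
    · rw [show gS (Equiv.swap (0:Fin 2) 1) = B from gS_c, ΨB]
      rfl

end SdpAux

theorem stmt_12 :
    ∃ e : PresentedGroup sdpRelsTwo ≃*
        (Multiplicative (Fin 2 → ℤ) ⋊[permHom (Fin 2)] Equiv.Perm (Fin 2)),
      e (PresentedGroup.of true) =
        ⟨Multiplicative.ofAdd (Pi.single (1 : Fin 2) (1 : ℤ)),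
          Equiv.swap (0 : Fin 2) (1 : Fin 2)⟩ ∧
      e (PresentedGroup.of false) =
        ⟨1, Equiv.swap (0 : Fin 2) (1 : Fin 2)⟩ := by
  exact ⟨SdpAux.Ψ.toMulEquiv SdpAux.Φ SdpAux.ΦΨ SdpAux.ΨΦ, SdpAux.ΨA, SdpAux.ΨB⟩
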